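/- arXiv:1903.00558 — 7 statements merged into one kernel-verified Lean document; each statement's English description precedes it below -/
import Mathlib

section
/- Let θ_a > θ_b > θ_c > 0 be real numbers, and for positive reals x, y write p̃_{xy} := x/(x+y) − 1/2. If ε₁ > 0 and ε₂ > 0 satisfy ε₁ + ε₂ < 1/2, and p̃_{ba} > −ε₁ and p̃_{cb} > −ε₂, then p̃_{ca} > −(ε₁ + ε₂). -/
/-- Plackett–Luce margin composition: if `p̃_{ba} > -ε₁` and `p̃_{cb} > -ε₂` with
`ε₁ + ε₂ < 1/2`, then `p̃_{ca} > -(ε₁ + ε₂)`, where `p̃_{xy} = x/(x+y) - 1/2`. -/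
theorem stmt0 (θa θb θc ε1 ε2 : ℝ)
    (hc : 0 < θc) (hcb : θc < θb) (hba : θb < θa)
    (hε1 : 0 < ε1) (hε2 : 0 < ε2) (hsum : ε1 + ε2 < 1/2)
    (h1 : θb / (θb + θa) - 1/2 > -ε1)
    (h2 : θc / (θc + θb) - 1/2 > -ε2) :
    θc / (θc + θa) - 1/2 > -(ε1 + ε2) := by
  have hb : 0 < θb := hc.trans hcb
  have ha : 0 < θa := hb.trans hba
  have dba : 0 < θb + θa := by linarith
  have dcb : 0 < θc + θb := by linarith
  have dca : 0 < θc + θa := by linarith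
  have H1 : θb > (1/2 - ε1) * (θb + θa) := by
    have := (lt_div_iff₀ dba).mp (by linarith : (1/2 - ε1) < θb / (θb + θa))
    linarith
  have H2 : θc > (1/2 - ε2) * (θc + θb) := by
    have := (lt_div_iff₀ dcb).mp (by linarith : (1/2 - ε2) < θc / (θc + θb))
    linarith
  have key : θc > (1/2 - (ε1 + ε2)) * (θc + θa) := by
    -- From H1: θb*(1/2+ε1) > (1/2-ε1)*θa ; from H2: θc*(1/2+ε2) > (1/2-ε2)*θb
    have e1 : 0 < 1/2 - ε1 := by linarith
    have e2 : 0 < 1/2 - ε2 := by linarith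
    have A : θb * (1/2 + ε1) > (1/2 - ε1) * θa := by nlinarith
    have B : θc * (1/2 + ε2) > (1/2 - ε2) * θb := by nlinarith
    have C : θc * (1/2 + ε2) * (1/2 + ε1) > (1/2 - ε2) * (1/2 - ε1) * θa := by
      nlinarith [mul_pos e2 hb, mul_pos e1 ha]
    nlinarith [mul_pos hε1 hε2, mul_pos (mul_pos hε1 hε2) ha,
      mul_pos (mul_pos hε1 hε2) hc]
  have : (1/2 - (ε1 + ε2)) < θc / (θc + θa) := by
    rw [lt_div_iff₀ dca]; linarith
  linarith
end

section
/- Let L ≥ 1 be an integer, let θ_0, θ_1, …, θ_L > 0 be real numbers, and let ε_1, …, ε_L > 0 satisfy Σ_{ℓ=1}^L ε_ℓ < 1/2. If for every ℓ ∈ {1, …, L} one has θ_ℓ/(θ_ℓ + θ_{ℓ−1}) − 1/2 > −ε_ℓ, then θ_L/(θ_L + θ_0) − 1/2 > −Σ_{ℓ=1}^L ε_ℓ. -/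
private lemma pl_conv (x y e : ℝ) (hx : 0 < x) (hy : 0 < y) :
    (x / (x + y) - 1/2 > -e) ↔ y * (1 - 2*e) < x * (1 + 2*e) := by
  have hxy : 0 < x + y := by linarith
  constructor
  · intro h
    have h2 : (1/2 - e) * (x + y) < x := by
      have := (lt_div_iff₀ hxy).mp (by linarith : (1/2 - e) < x / (x + y))
      linarith
    nlinarith
  · intro h
    have h2 : (1/2 - e) * (x + y) < x := by nlinarith
    have := (lt_div_iff₀ hxy).mpr h2
    linarith

private lemma pl_comp (a b c S e : ℝ) (ha : 0 < a) (hb : 0 < b) (hc : 0 < c)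
    (hS : 0 < S) (he : 0 < e) (hSe : S + e < 1/2)
    (h1 : a * (1 - 2*S) < b * (1 + 2*S)) (h2 : b * (1 - 2*e) < c * (1 + 2*e)) :
    a * (1 - 2*(S + e)) < c * (1 + 2*(S + e)) := by
  have hS2 : 1 - 2*S > 0 := by linarith
  have he2 : 1 - 2*e > 0 := by linarith
  have h3 : a * (1 - 2*S) * (1 - 2*e) < c * (1 + 2*S) * (1 + 2*e) := by
    nlinarith [mul_pos hb he2, mul_pos hb hS2]
  nlinarith [mul_pos (mul_pos ha hS2) he2, mul_pos hS he, mul_pos hc (mul_pos hS he),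
    mul_pos (mul_pos hc hS) he]

/-- Chained Plackett–Luce margin composition: if each consecutive shifted preference
`θ_ℓ/(θ_ℓ + θ_{ℓ-1}) - 1/2 > -ε_ℓ` and `∑ ε_ℓ < 1/2`, then
`θ_L/(θ_L + θ_0) - 1/2 > -∑ ε_ℓ`. -/
theorem stmt1 (L : ℕ) (hL : 1 ≤ L) (θ ε : ℕ → ℝ)
    (hθ : ∀ ℓ ≤ L, 0 < θ ℓ)
    (hε : ∀ ℓ ∈ Finset.Icc 1 L, 0 < ε ℓ)
    (hsum : ∑ ℓ ∈ Finset.Icc 1 L, ε ℓ < 1/2)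
    (hstep : ∀ ℓ ∈ Finset.Icc 1 L, θ ℓ / (θ ℓ + θ (ℓ - 1)) - 1/2 > -ε ℓ) :
    θ L / (θ L + θ 0) - 1/2 > -∑ ℓ ∈ Finset.Icc 1 L, ε ℓ := by
  -- partial sums
  set S : ℕ → ℝ := fun n => ∑ ℓ ∈ Finset.Icc 1 n, ε ℓ with hSdef
  have hSpos : ∀ n, 1 ≤ n → n ≤ L → 0 < S n := by
    intro n h1 h2
    apply Finset.sum_pos
    · intro i hi
      exact hε i (Finset.mem_Icc.mpr ⟨(Finset.mem_Icc.mp hi).1, le_trans (Finset.mem_Icc.mp hi).2 h2⟩)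
    · exact ⟨1, Finset.mem_Icc.mpr ⟨le_refl 1, h1⟩⟩
  have hSle : ∀ n, n ≤ L → S n ≤ S L := by
    intro n hn
    apply Finset.sum_le_sum_of_subset_of_nonneg
    · intro i hi
      exact Finset.mem_Icc.mpr ⟨(Finset.mem_Icc.mp hi).1, le_trans (Finset.mem_Icc.mp hi).2 hn⟩
    · intro i hi _
      exact le_of_lt (hε i hi)
  have key : ∀ n, 1 ≤ n → n ≤ L → θ 0 * (1 - 2 * S n) < θ n * (1 + 2 * S n) := by
    intro n h1
    induction n, h1 using Nat.le_induction with
    | base =>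
      intro h1L
      have hs := hstep 1 (Finset.mem_Icc.mpr ⟨le_refl 1, h1L⟩)
      simp only [Nat.sub_self] at hs
      have h1 : S 1 = ε 1 := by simp [hSdef]
      rw [h1]
      exact (pl_conv (θ 1) (θ 0) (ε 1) (hθ 1 h1L) (hθ 0 (by omega))).mp hs
    | succ n hn ih =>
      intro hnL
      have hnL' : n ≤ L := by omega
      have ihh := ih hnL'
      have hs := hstep (n+1) (Finset.mem_Icc.mpr ⟨by omega, hnL⟩)
      simp only [Nat.add_sub_cancel] at hs
      have hstep' : θ n * (1 - 2 * ε (n+1)) < θ (n+1) * (1 + 2 * ε (n+1)) :=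
        (pl_conv (θ (n+1)) (θ n) (ε (n+1)) (hθ (n+1) hnL) (hθ n hnL')).mp hs
      have hSsucc : S (n+1) = S n + ε (n+1) := by
        simp [hSdef, Finset.sum_Icc_succ_top (by omega : 1 ≤ n+1)]
      rw [hSsucc]
      have hεpos := hε (n+1) (Finset.mem_Icc.mpr ⟨by omega, hnL⟩)
      have hlt : S n + ε (n+1) < 1/2 := by
        have := hSle (n+1) hnL
        rw [hSsucc] at this
        linarith
      exact pl_comp (θ 0) (θ n) (θ (n+1)) (S n) (ε (n+1)) (hθ 0 (by omega))
        (hθ n hnL') (hθ (n+1) hnL) (hSpos n hn hnL') hεpos hlt ihh hstep'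
  exact (pl_conv (θ L) (θ 0) (S L) (hθ L le_rfl) (hθ 0 (by omega))).mpr (key L hL le_rfl)
end

section
/- Let S be a finite nonempty set, let θ_i > 0 for each i ∈ S, let θ_S := Σ_{i∈S} θ_i, fix a ∈ S, and let Δ' be a real number with θ_a + Δ' > 0. Define probability mass functions on S by p(i) = θ_i/θ_S for all i ∈ S, and q(i) = θ_i/(θ_S + Δ') for i ≠ a with q(a) = (θ_a + Δ')/(θ_S + Δ'). Then Σ_{i∈S} p(i)²/q(i) − 1 = Δ'² (θ_S − θ_a) / (θ_S² (θ_a + Δ')). -/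
/-- Chi-square-type identity for the perturbed Plackett–Luce winner distribution:
`∑ i ∈ S, p(i)²/q(i) - 1 = Δ'² (θ_S - θ_a) / (θ_S² (θ_a + Δ'))`, where
`p(i) = θ_i/θ_S`, `q(i) = θ_i/(θ_S + Δ')` for `i ≠ a`, and
`q(a) = (θ_a + Δ')/(θ_S + Δ')`. -/
theorem stmt5 {ι : Type*} [DecidableEq ι] (S : Finset ι) (hS : S.Nonempty)
    (θ : ι → ℝ) (hθ : ∀ i ∈ S, 0 < θ i) (a : ι) (ha : a ∈ S)
    (Δ' : ℝ) (hΔ : 0 < θ a + Δ') :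
    (∑ i ∈ S, (θ i / ∑ j ∈ S, θ j) ^ 2 /
        (if i = a then (θ a + Δ') / ((∑ j ∈ S, θ j) + Δ')
         else θ i / ((∑ j ∈ S, θ j) + Δ'))) - 1
      = Δ' ^ 2 * ((∑ j ∈ S, θ j) - θ a) / ((∑ j ∈ S, θ j) ^ 2 * (θ a + Δ')) := by
  set T := ∑ j ∈ S, θ j with hTdef
  have hθa := hθ a ha
  have hT : 0 < T := Finset.sum_pos hθ hS
  have hTa : θ a ≤ T := Finset.single_le_sum (fun i hi => (hθ i hi).le) ha
  have hTΔ : 0 < T + Δ' := by linarith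
  rw [← Finset.add_sum_erase _ _ ha, if_pos rfl]
  have hrest : ∑ i ∈ S.erase a, (θ i / T) ^ 2 /
      (if i = a then (θ a + Δ') / (T + Δ') else θ i / (T + Δ'))
      = (∑ i ∈ S.erase a, θ i) * ((T + Δ') / T ^ 2) := by
    rw [Finset.sum_mul]
    refine Finset.sum_congr rfl fun i hi => ?_
    have hia := Finset.ne_of_mem_erase hi
    have hθi := hθ i (Finset.mem_of_mem_erase hi)
    rw [if_neg hia]
    field_simp
  rw [hrest, Finset.sum_erase_eq_sub ha, ← hTdef]
  field_simp
  ring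
end

section
/- Let S be a finite nonempty set, let θ_i > 0 for each i ∈ S, let θ_S := Σ_{i∈S} θ_i, fix a ∈ S, and let Δ' be a real number with θ_a + Δ' > 0. Let p be the Plackett–Luce winner distribution on S for the parameters θ, and q the Plackett–Luce winner distribution on S for the perturbed parameters in which θ_a is replaced by θ_a + Δ' and all other parameters are unchanged. Then KL(p, q) ≤ Δ'² (θ_S − θ_a) / (θ_S² (θ_a + Δ')); in particular, KL(p, q) ≤ Δ'² / (θ_S (θ_a + Δ')). -/
/-- KL-divergence bound between a Plackett–Luce winner distribution and its
perturbation in a single coordinate `a`: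
`KL(p,q) ≤ Δ'² (θ_S - θ_a)/(θ_S² (θ_a + Δ'))` and in particular
`KL(p,q) ≤ Δ'²/(θ_S (θ_a + Δ'))`. -/
theorem stmt6 {ι : Type*} [DecidableEq ι] (S : Finset ι) (hS : S.Nonempty)
    (θ : ι → ℝ) (hθ : ∀ i ∈ S, 0 < θ i) (a : ι) (ha : a ∈ S)
    (Δ' : ℝ) (hΔ : 0 < θ a + Δ') :
    (∑ i ∈ S, (θ i / ∑ j ∈ S, θ j) *
        Real.log ((θ i / ∑ j ∈ S, θ j) /
          (if i = a then (θ a + Δ') / ((∑ j ∈ S, θ j) + Δ')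
           else θ i / ((∑ j ∈ S, θ j) + Δ'))))
      ≤ Δ' ^ 2 * ((∑ j ∈ S, θ j) - θ a) / ((∑ j ∈ S, θ j) ^ 2 * (θ a + Δ')) ∧
    (∑ i ∈ S, (θ i / ∑ j ∈ S, θ j) *
        Real.log ((θ i / ∑ j ∈ S, θ j) /
          (if i = a then (θ a + Δ') / ((∑ j ∈ S, θ j) + Δ')
           else θ i / ((∑ j ∈ S, θ j) + Δ'))))
      ≤ Δ' ^ 2 / ((∑ j ∈ S, θ j) * (θ a + Δ')) := by
  set T : ℝ := ∑ j ∈ S, θ j with hT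
  have hTpos : 0 < T := Finset.sum_pos hθ hS
  have haT : θ a ≤ T := Finset.single_le_sum (fun i hi => (hθ i hi).le) ha
  have hapos : 0 < θ a := hθ a ha
  have hTΔ : 0 < T + Δ' := by linarith
  -- rewrite the sum
  have key : (∑ i ∈ S, (θ i / T) *
        Real.log ((θ i / T) /
          (if i = a then (θ a + Δ') / (T + Δ')
           else θ i / (T + Δ'))))
      = ((T - θ a) / T) * Real.log ((T + Δ') / T)
        + (θ a / T) * Real.log (θ a * (T + Δ') / (T * (θ a + Δ'))) := by
    rw [← Finset.sum_erase_add _ _ ha]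
    have h1 : ∀ i ∈ S.erase a, (θ i / T) *
        Real.log ((θ i / T) /
          (if i = a then (θ a + Δ') / (T + Δ')
           else θ i / (T + Δ')))
        = (θ i / T) * Real.log ((T + Δ') / T) := by
      intro i hi
      have hia : i ≠ a := Finset.ne_of_mem_erase hi
      have hiS : i ∈ S := Finset.mem_of_mem_erase hi
      have hip : 0 < θ i := hθ i hiS
      rw [if_neg hia]
      congr 1
      rw [div_div_div_comm, div_self hip.ne', one_div, inv_div]
    rw [Finset.sum_congr rfl h1, ← Finset.sum_mul, ← Finset.sum_div,
      Finset.sum_erase_eq_sub ha, if_pos rfl]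
    have harg : (θ a / T) / ((θ a + Δ') / (T + Δ'))
        = θ a * (T + Δ') / (T * (θ a + Δ')) := by
      field_simp
      try ring
    rw [harg]
  rw [key]
  have hA : 0 < θ a * (T + Δ') / (T * (θ a + Δ')) := by positivity
  have hB : 0 < (T + Δ') / T := by positivity
  have lA := Real.log_le_sub_one_of_pos hA
  have lB := Real.log_le_sub_one_of_pos hB
  have h1 : ((T - θ a) / T) * Real.log ((T + Δ') / T)
        + (θ a / T) * Real.log (θ a * (T + Δ') / (T * (θ a + Δ')))
      ≤ Δ' ^ 2 * (T - θ a) / (T ^ 2 * (θ a + Δ')) := by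
    have e1 : (T + Δ') / T - 1 = Δ' / T := by field_simp; ring
    have e2 : θ a * (T + Δ') / (T * (θ a + Δ')) - 1
        = Δ' * (θ a - T) / (T * (θ a + Δ')) := by
      field_simp
      ring
    have b1 : ((T - θ a) / T) * Real.log ((T + Δ') / T)
        ≤ ((T - θ a) / T) * (Δ' / T) := by
      rw [← e1]
      exact mul_le_mul_of_nonneg_left lB (div_nonneg (by linarith) hTpos.le)
    have b2 : (θ a / T) * Real.log (θ a * (T + Δ') / (T * (θ a + Δ')))
        ≤ (θ a / T) * (Δ' * (θ a - T) / (T * (θ a + Δ'))) := by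
      rw [← e2]
      exact mul_le_mul_of_nonneg_left lA (div_nonneg hapos.le hTpos.le)
    have eq3 : ((T - θ a) / T) * (Δ' / T)
        + (θ a / T) * (Δ' * (θ a - T) / (T * (θ a + Δ')))
        = Δ' ^ 2 * (T - θ a) / (T ^ 2 * (θ a + Δ')) := by
      field_simp
      ring
    linarith
  refine ⟨h1, h1.trans ?_⟩
  rw [div_le_div_iff₀ (by positivity) (by positivity)]
  have hnn : 0 ≤ Δ' ^ 2 * (T * ((θ a + Δ') * θ a)) :=
    mul_nonneg (sq_nonneg _) (mul_nonneg hTpos.le (mul_nonneg hΔ.le hapos.le))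
  nlinarith [hnn]
end

section
/- Let n ≥ 2, let θ : {1,…,n} → (0,∞), and let u and a be two distinct items with θ_u > θ_a; set Δ := θ_u − θ_a. Let θ' be obtained from θ by swapping the values at u and a (θ'_u = θ_a, θ'_a = θ_u, and θ'_i = θ_i for i ∉ {u,a}). For any finite nonempty S ⊆ {1,…,n}, let p and q be the Plackett–Luce winner distributions on S under θ and θ' respectively, and let θ_S := Σ_{i∈S} θ_i. Then KL(p, q) ≤ (Δ²/θ_S) · (θ_u·1[u ∈ S] + θ_a·1[a ∈ S]) / (θ_u θ_a). -/
/-- Change-of-measure estimate for the swapped Plackett–Luce instance (winner feedback):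
if `θ'` is obtained from `θ` by swapping the values at `u` and `a` (with `θ_u > θ_a`,
`Δ = θ_u - θ_a`), then for any nonempty `S ⊆ {1,…,n}`, the KL divergence between the
winner distributions on `S` under `θ` and `θ'` is at most
`(Δ²/θ_S) · (θ_u·1[u∈S] + θ_a·1[a∈S]) / (θ_u θ_a)`. -/
theorem stmt7 (n : ℕ) (hn : 2 ≤ n) (θ : ℕ → ℝ)
    (hθ : ∀ i ∈ Finset.Icc 1 n, 0 < θ i)
    (u a : ℕ) (hu : u ∈ Finset.Icc 1 n) (ha : a ∈ Finset.Icc 1 n)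
    (hua : u ≠ a) (hgap : θ a < θ u)
    (θ' : ℕ → ℝ)
    (hθ' : θ' = fun i => if i = u then θ a else if i = a then θ u else θ i)
    (S : Finset ℕ) (hSsub : S ⊆ Finset.Icc 1 n) (hS : S.Nonempty) :
    (∑ i ∈ S, (θ i / ∑ j ∈ S, θ j) *
        Real.log ((θ i / ∑ j ∈ S, θ j) / (θ' i / ∑ j ∈ S, θ' j)))
      ≤ ((θ u - θ a) ^ 2 / ∑ j ∈ S, θ j) *
          ((θ u * (if u ∈ S then 1 else 0) + θ a * (if a ∈ S then 1 else 0)) /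
            (θ u * θ a)) := by
  have hθu : 0 < θ u := hθ u hu
  have hθa : 0 < θ a := hθ a ha
  have hθ'u : θ' u = θ a := by simp [hθ']
  have hθ'a : θ' a = θ u := by simp [hθ', hua.symm, (Ne.symm hua)]
  have hθ'o : ∀ i, i ≠ u → i ≠ a → θ' i = θ i := by
    intro i h1 h2; simp [hθ', h1, h2]
  have hpos : ∀ i ∈ S, 0 < θ i := fun i hi => hθ i (hSsub hi)
  have hpos' : ∀ i ∈ S, 0 < θ' i := by
    intro i hi
    by_cases h1 : i = u
    · rw [h1, hθ'u]; exact hθa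
    by_cases h2 : i = a
    · rw [h2, hθ'a]; exact hθu
    · rw [hθ'o i h1 h2]; exact hpos i hi
  set T := ∑ j ∈ S, θ j with hT_def
  set T' := ∑ j ∈ S, θ' j with hT'_def
  have hT : 0 < T := Finset.sum_pos hpos hS
  have hT' : 0 < T' := Finset.sum_pos hpos' hS
  have hsum1 : ∑ i ∈ S, θ i / T = 1 := by
    rw [← Finset.sum_div, div_self hT.ne']
  have hsplit : ∀ i ∈ S, (θ i / T) * Real.log ((θ i / T) / (θ' i / T')) =
      (θ i / T) * Real.log (θ i / θ' i) + (θ i / T) * Real.log (T' / T) := by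
    intro i hi
    have h1 := hpos i hi
    have h2 := hpos' i hi
    rw [show (θ i / T) / (θ' i / T') = (θ i / θ' i) * (T' / T) by
      field_simp]
    rw [Real.log_mul (by positivity) (by positivity), mul_add]
  rw [Finset.sum_congr rfl hsplit, Finset.sum_add_distrib, ← Finset.sum_mul, hsum1, one_mul]
  have hxu : Real.log (θ u / θ a) ≤ (θ u - θ a) / θ a := by
    have h := Real.log_le_sub_one_of_pos (show 0 < θ u / θ a by positivity)
    have he : (θ u - θ a) / θ a = θ u / θ a - 1 := by
      rw [sub_div, div_self hθa.ne']
    linarith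
  have hxa : Real.log (θ a / θ u) ≤ (θ a - θ u) / θ u := by
    have h := Real.log_le_sub_one_of_pos (show 0 < θ a / θ u by positivity)
    have he : (θ a - θ u) / θ u = θ a / θ u - 1 := by
      rw [sub_div, div_self hθu.ne']
    linarith
  by_cases hu' : u ∈ S <;> by_cases ha' : a ∈ S
  · -- both in S
    have hTT : T' = T := by
      rw [hT'_def, hT_def]
      rw [Finset.sum_congr rfl
        (show ∀ i ∈ S, θ' i = θ i + ((if i = u then θ a - θ u else 0) +
            (if i = a then θ u - θ a else 0)) by
          intro i hi
          by_cases h1 : i = u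
          · subst h1; rw [hθ'u, if_pos rfl, if_neg hua]; ring
          by_cases h2 : i = a
          · subst h2; rw [hθ'a, if_neg h1, if_pos rfl]; ring
          · rw [hθ'o i h1 h2, if_neg h1, if_neg h2]; ring)]
      rw [Finset.sum_add_distrib, Finset.sum_add_distrib,
        Finset.sum_ite_eq' S u, Finset.sum_ite_eq' S a, if_pos hu', if_pos ha']
      ring
    have hAsum : ∀ i ∈ S, (θ i / T) * Real.log (θ i / θ' i) =
        (if i = u then (θ u / T) * Real.log (θ u / θ a) else 0) +
        (if i = a then (θ a / T) * Real.log (θ a / θ u) else 0) := by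
      intro i hi
      by_cases h1 : i = u
      · subst h1; rw [hθ'u, if_pos rfl, if_neg hua]; ring
      by_cases h2 : i = a
      · subst h2; rw [hθ'a, if_neg h1, if_pos rfl]; ring
      · rw [hθ'o i h1 h2, if_neg h1, if_neg h2, div_self (hpos i hi).ne',
          Real.log_one]; ring
    rw [Finset.sum_congr rfl hAsum, Finset.sum_add_distrib,
      Finset.sum_ite_eq' S u, Finset.sum_ite_eq' S a, if_pos hu', if_pos ha',
      hTT, div_self hT.ne', Real.log_one, if_pos hu', if_pos ha']
    have hloga : Real.log (θ a / θ u) = - Real.log (θ u / θ a) := by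
      rw [Real.log_div hθa.ne' hθu.ne', Real.log_div hθu.ne' hθa.ne']; ring
    rw [hloga]
    have hcoef : (0:ℝ) ≤ (θ u - θ a) / T := div_nonneg (by linarith) hT.le
    have h1 : (θ u / T) * Real.log (θ u / θ a) + (θ a / T) * -Real.log (θ u / θ a) + 0
        = ((θ u - θ a) / T) * Real.log (θ u / θ a) := by ring
    rw [h1]
    calc ((θ u - θ a) / T) * Real.log (θ u / θ a)
        ≤ ((θ u - θ a) / T) * ((θ u - θ a) / θ a) :=
          mul_le_mul_of_nonneg_left hxu hcoef
      _ ≤ (θ u - θ a) ^ 2 / T * ((θ u * 1 + θ a * 1) / (θ u * θ a)) := by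
          rw [div_mul_div_comm, div_mul_div_comm,
            div_le_div_iff₀ (by positivity) (by positivity)]
          nlinarith [mul_nonneg (mul_nonneg (sq_nonneg (θ u - θ a)) hT.le)
            (mul_nonneg hθa.le hθa.le)]
  · -- u ∈ S, a ∉ S
    have hTT : T' = T + (θ a - θ u) := by
      rw [hT'_def, hT_def]
      rw [Finset.sum_congr rfl
        (show ∀ i ∈ S, θ' i = θ i + (if i = u then θ a - θ u else 0) by
          intro i hi
          have h2 : i ≠ a := fun h => ha' (h ▸ hi)
          by_cases h1 : i = u
          · subst h1; rw [hθ'u, if_pos rfl]; ring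
          · rw [hθ'o i h1 h2, if_neg h1]; ring)]
      rw [Finset.sum_add_distrib, Finset.sum_ite_eq' S u, if_pos hu']
    have hAsum : ∀ i ∈ S, (θ i / T) * Real.log (θ i / θ' i) =
        (if i = u then (θ u / T) * Real.log (θ u / θ a) else 0) := by
      intro i hi
      have h2 : i ≠ a := fun h => ha' (h ▸ hi)
      by_cases h1 : i = u
      · subst h1; rw [hθ'u, if_pos rfl]
      · rw [hθ'o i h1 h2, if_neg h1, div_self (hpos i hi).ne', Real.log_one]; ring
    rw [Finset.sum_congr rfl hAsum, Finset.sum_ite_eq' S u, if_pos hu',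
      if_pos hu', if_neg ha']
    have hy : Real.log (T' / T) ≤ (θ a - θ u) / T := by
      have h := Real.log_le_sub_one_of_pos (div_pos hT' hT)
      have he : T' / T - 1 = (θ a - θ u) / T := by
        rw [hTT]; field_simp; ring
      linarith
    have h1 : (θ u / T) * Real.log (θ u / θ a) ≤ (θ u / T) * ((θ u - θ a) / θ a) :=
      mul_le_mul_of_nonneg_left hxu (by positivity)
    have heq : (θ u / T) * ((θ u - θ a) / θ a) + (θ a - θ u) / T
        = (θ u - θ a) ^ 2 / T * ((θ u * 1 + θ a * 0) / (θ u * θ a)) := by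
      field_simp; ring
    linarith
  · -- a ∈ S, u ∉ S
    have hTT : T' = T + (θ u - θ a) := by
      rw [hT'_def, hT_def]
      rw [Finset.sum_congr rfl
        (show ∀ i ∈ S, θ' i = θ i + (if i = a then θ u - θ a else 0) by
          intro i hi
          have h1 : i ≠ u := fun h => hu' (h ▸ hi)
          by_cases h2 : i = a
          · subst h2; rw [hθ'a, if_pos rfl]; ring
          · rw [hθ'o i h1 h2, if_neg h2]; ring)]
      rw [Finset.sum_add_distrib, Finset.sum_ite_eq' S a, if_pos ha']
    have hAsum : ∀ i ∈ S, (θ i / T) * Real.log (θ i / θ' i) =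
        (if i = a then (θ a / T) * Real.log (θ a / θ u) else 0) := by
      intro i hi
      have h1 : i ≠ u := fun h => hu' (h ▸ hi)
      by_cases h2 : i = a
      · subst h2; rw [hθ'a, if_pos rfl]
      · rw [hθ'o i h1 h2, if_neg h2, div_self (hpos i hi).ne', Real.log_one]; ring
    rw [Finset.sum_congr rfl hAsum, Finset.sum_ite_eq' S a, if_pos ha',
      if_neg hu', if_pos ha']
    have hy : Real.log (T' / T) ≤ (θ u - θ a) / T := by
      have h := Real.log_le_sub_one_of_pos (div_pos hT' hT)
      have he : T' / T - 1 = (θ u - θ a) / T := by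
        rw [hTT]; field_simp; ring
      linarith
    have h1 : (θ a / T) * Real.log (θ a / θ u) ≤ (θ a / T) * ((θ a - θ u) / θ u) :=
      mul_le_mul_of_nonneg_left hxa (by positivity)
    have heq : (θ a / T) * ((θ a - θ u) / θ u) + (θ u - θ a) / T
        = (θ u - θ a) ^ 2 / T * ((θ u * 0 + θ a * 1) / (θ u * θ a)) := by
      field_simp; ring
    linarith
  · -- neither in S
    have hTT : T' = T := by
      rw [hT'_def, hT_def]
      refine Finset.sum_congr rfl fun i hi => ?_
      exact hθ'o i (fun h => hu' (h ▸ hi)) (fun h => ha' (h ▸ hi))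
    have hAsum : ∀ i ∈ S, (θ i / T) * Real.log (θ i / θ' i) = 0 := by
      intro i hi
      rw [hθ'o i (fun h => hu' (h ▸ hi)) (fun h => ha' (h ▸ hi)),
        div_self (hpos i hi).ne', Real.log_one, mul_zero]
    rw [Finset.sum_congr rfl hAsum, Finset.sum_const, smul_zero,
      hTT, div_self hT.ne', Real.log_one, if_neg hu', if_neg ha']
    simp
end

section
/- Fix integers n ≥ 2 and 2 ≤ k ≤ n, parameters θ : {1,…,n} → (0,1] with θ_1 > θ_a for all a ∈ {2,…,n}, and ε > 0; set Δ'_a := θ_1 − θ_a + ε for a ∈ {2,…,n}, and for a subset S set θ_S := Σ_{i∈S} θ_i. Let L ≥ 0 and let N assign a nonnegative real N_S to every subset S ⊆ {1,…,n} of size k. If for every a ∈ {2,…,n} one has Σ_{S : |S|=k, a∈S} N_S · Δ'_a² / (θ_S (θ_1 + ε)) ≥ L, then Σ_{S : |S|=k} N_S ≥ L · Σ_{a=2}^{n} θ_a (θ_1 + ε) / Δ'_a². -/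
/-- LP weak-duality step of the sample-complexity lower bound: if nonnegative play
counts `N_S` over the `k`-subsets of `{1,…,n}` satisfy, for each suboptimal item
`a ∈ {2,…,n}`, the constraint
`∑_{S ∋ a} N_S Δ'_a² / (θ_S (θ_1 + ε)) ≥ L` (with `Δ'_a = θ_1 - θ_a + ε`), then
`∑_S N_S ≥ L ∑_{a=2}^n θ_a (θ_1 + ε)/Δ'_a²`. -/
theorem stmt8 (n k : ℕ) (hn : 2 ≤ n) (hk2 : 2 ≤ k) (hkn : k ≤ n)
    (θ : ℕ → ℝ) (hθ : ∀ i ∈ Finset.Icc 1 n, 0 < θ i ∧ θ i ≤ 1)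
    (hbest : ∀ a ∈ Finset.Icc 2 n, θ a < θ 1)
    (ε : ℝ) (hε : 0 < ε) (L : ℝ) (hL : 0 ≤ L)
    (N : Finset ℕ → ℝ)
    (hN : ∀ S ∈ (Finset.Icc 1 n).powersetCard k, 0 ≤ N S)
    (hcon : ∀ a ∈ Finset.Icc 2 n,
      L ≤ ∑ S ∈ ((Finset.Icc 1 n).powersetCard k).filter (fun S => a ∈ S),
            N S * (θ 1 - θ a + ε) ^ 2 / ((∑ i ∈ S, θ i) * (θ 1 + ε))) :
    L * ∑ a ∈ Finset.Icc 2 n, θ a * (θ 1 + ε) / (θ 1 - θ a + ε) ^ 2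
      ≤ ∑ S ∈ (Finset.Icc 1 n).powersetCard k, N S := by
  set P := (Finset.Icc 1 n).powersetCard k with hP
  have hθ1 : 0 < θ 1 := (hθ 1 (by simp [Finset.mem_Icc]; omega)).1
  have hθ1ε : 0 < θ 1 + ε := by linarith
  have hSpos : ∀ S ∈ P, 0 < ∑ i ∈ S, θ i := by
    intro S hS
    rw [hP, Finset.mem_powersetCard] at hS
    have hne : S.Nonempty := by
      rw [← Finset.card_pos, hS.2]; omega
    exact Finset.sum_pos (fun i hi => (hθ i (hS.1 hi)).1) hne
  have key : ∀ a ∈ Finset.Icc 2 n,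
      L * (θ a * (θ 1 + ε) / (θ 1 - θ a + ε) ^ 2)
      ≤ ∑ S ∈ P.filter (fun S => a ∈ S), N S * θ a / (∑ i ∈ S, θ i) := by
    intro a ha
    have hΔ : 0 < θ 1 - θ a + ε := by have := hbest a ha; linarith
    have hθa : 0 < θ a := by
      refine (hθ a ?_).1
      simp only [Finset.mem_Icc] at ha ⊢; omega
    have hw : 0 ≤ θ a * (θ 1 + ε) / (θ 1 - θ a + ε) ^ 2 := by positivity
    calc L * (θ a * (θ 1 + ε) / (θ 1 - θ a + ε) ^ 2)
        ≤ (∑ S ∈ P.filter (fun S => a ∈ S),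
            N S * (θ 1 - θ a + ε) ^ 2 / ((∑ i ∈ S, θ i) * (θ 1 + ε)))
          * (θ a * (θ 1 + ε) / (θ 1 - θ a + ε) ^ 2) :=
          mul_le_mul_of_nonneg_right (hcon a ha) hw
      _ = ∑ S ∈ P.filter (fun S => a ∈ S), N S * θ a / (∑ i ∈ S, θ i) := by
          rw [Finset.sum_mul]
          refine Finset.sum_congr rfl fun S hS => ?_
          have hSp : 0 < ∑ i ∈ S, θ i := hSpos S (Finset.mem_filter.mp hS).1
          field_simp
  have h1 : L * ∑ a ∈ Finset.Icc 2 n, θ a * (θ 1 + ε) / (θ 1 - θ a + ε) ^ 2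
      ≤ ∑ a ∈ Finset.Icc 2 n, ∑ S ∈ P.filter (fun S => a ∈ S),
          N S * θ a / (∑ i ∈ S, θ i) := by
    rw [Finset.mul_sum]
    exact Finset.sum_le_sum key
  have h2 : (∑ a ∈ Finset.Icc 2 n, ∑ S ∈ P.filter (fun S => a ∈ S),
          N S * θ a / (∑ i ∈ S, θ i))
      = ∑ S ∈ P, ∑ a ∈ (Finset.Icc 2 n).filter (fun a => a ∈ S),
          N S * θ a / (∑ i ∈ S, θ i) := by
    simp only [Finset.sum_filter]
    exact Finset.sum_comm
  have h3 : ∀ S ∈ P, (∑ a ∈ (Finset.Icc 2 n).filter (fun a => a ∈ S),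
        N S * θ a / (∑ i ∈ S, θ i)) ≤ N S := by
    intro S hS
    have hSp : 0 < ∑ i ∈ S, θ i := hSpos S hS
    have hNS : 0 ≤ N S := hN S hS
    have hsub : (Finset.Icc 2 n).filter (fun a => a ∈ S) ⊆ S := by
      intro a ha; exact (Finset.mem_filter.mp ha).2
    have hSsub : S ⊆ Finset.Icc 1 n := by
      rw [hP, Finset.mem_powersetCard] at hS; exact hS.1
    have hle : (∑ a ∈ (Finset.Icc 2 n).filter (fun a => a ∈ S), θ a)
        ≤ ∑ i ∈ S, θ i :=
      Finset.sum_le_sum_of_subset_of_nonneg hsub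
        (fun i hi _ => le_of_lt (hθ i (hSsub hi)).1)
    calc (∑ a ∈ (Finset.Icc 2 n).filter (fun a => a ∈ S),
            N S * θ a / (∑ i ∈ S, θ i))
        = N S * (∑ a ∈ (Finset.Icc 2 n).filter (fun a => a ∈ S), θ a)
          / (∑ i ∈ S, θ i) := by
          rw [Finset.mul_sum, Finset.sum_div]
      _ ≤ N S * (∑ i ∈ S, θ i) / (∑ i ∈ S, θ i) := by
          gcongr
      _ = N S := by field_simp
  calc L * ∑ a ∈ Finset.Icc 2 n, θ a * (θ 1 + ε) / (θ 1 - θ a + ε) ^ 2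
      ≤ ∑ a ∈ Finset.Icc 2 n, ∑ S ∈ P.filter (fun S => a ∈ S),
          N S * θ a / (∑ i ∈ S, θ i) := h1
    _ = ∑ S ∈ P, ∑ a ∈ (Finset.Icc 2 n).filter (fun a => a ∈ S),
          N S * θ a / (∑ i ∈ S, θ i) := h2
    _ ≤ ∑ S ∈ P, N S := Finset.sum_le_sum h3
end

section
/- Fix integers n ≥ 2 and 2 ≤ k ≤ n, parameters θ : {1,…,n} → (0,1] with θ_1 > θ_a for all a ∈ {2,…,n}, and ε > 0. For each a ∈ {2,…,n}, let θ^a be the perturbed parameter vector with θ^a_a = θ_1 + ε and θ^a_i = θ_i for i ≠ a; for each subset S ⊆ {1,…,n} of size k, let p_S and p^a_S denote the Plackett–Luce winner distributions on S under θ and θ^a respectively. Let L ≥ 0 and let N assign a nonnegative real N_S to every subset S of size k. If for every a ∈ {2,…,n} one has Σ_{S : |S|=k, a∈S} N_S · KL(p_S, p^a_S) ≥ L, then Σ_{S : |S|=k} N_S ≥ L · Σ_{a=2}^{n} θ_a (θ_1 + ε) / (θ_1 − θ_a + ε)². -/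
private lemma log_lb9 (x : ℝ) (hx : 0 < x) : 1 - 1/x ≤ Real.log x := by
  have h := Real.log_le_sub_one_of_pos (show (0:ℝ) < 1/x by positivity)
  rw [one_div, Real.log_inv] at h
  rw [one_div]
  linarith

private lemma kl_bound9 (θ : ℕ → ℝ) (a : ℕ) (S : Finset ℕ) (haS : a ∈ S)
    (hpos : ∀ i ∈ S, 0 < θ i) (c : ℝ) (hc : θ a < c) :
    ∑ i ∈ S, (θ i / ∑ j ∈ S, θ j) *
      Real.log ((θ i / ∑ j ∈ S, θ j) /
        (Function.update θ a c i / ∑ j ∈ S, Function.update θ a c j))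
    ≤ (c - θ a)^2 / (θ a * c) * (θ a / ∑ j ∈ S, θ j) := by
  have ha0 : 0 < θ a := hpos a haS
  have hc0 : 0 < c := lt_trans ha0 hc
  set T : ℝ := ∑ j ∈ S, θ j with hTdef
  have hT : 0 < T := Finset.sum_pos hpos ⟨a, haS⟩
  set d : ℝ := c - θ a with hd
  have hd0 : 0 < d := by simp [hd]; linarith
  have hupd : ∀ i ∈ S, 0 < Function.update θ a c i := by
    intro i hi
    by_cases h : i = a
    · subst h; simpa using hc0
    · rw [Function.update_of_ne h]; exact hpos i hi
  have hT' : ∑ j ∈ S, Function.update θ a c j = T + d := by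
    rw [Finset.sum_update_of_mem haS]
    have := Finset.add_sum_erase S θ haS
    rw [Finset.sdiff_singleton_eq_erase]
    rw [hTdef, hd]
    linarith
  have hT'0 : 0 < T + d := by linarith
  have key : ∀ i ∈ S, (θ i / T) * Real.log ((θ i / T) /
        (Function.update θ a c i / ∑ j ∈ S, Function.update θ a c j))
      = (θ i / T) * (Real.log (θ i) - Real.log (Function.update θ a c i))
        + (θ i / T) * (Real.log (T + d) - Real.log T) := by
    intro i hi
    rw [hT']
    rw [Real.log_div (ne_of_gt (div_pos (hpos i hi) hT)) (ne_of_gt (div_pos (hupd i hi) hT'0)),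
        Real.log_div (ne_of_gt (hpos i hi)) (ne_of_gt hT),
        Real.log_div (ne_of_gt (hupd i hi)) (ne_of_gt hT'0)]
    ring
  rw [Finset.sum_congr rfl key, Finset.sum_add_distrib]
  have hsum1 : ∑ i ∈ S, (θ i / T) * (Real.log (T + d) - Real.log T)
      = Real.log (T + d) - Real.log T := by
    rw [← Finset.sum_mul, ← Finset.sum_div, ← hTdef, div_self (ne_of_gt hT), one_mul]
  have hsum2 : ∑ i ∈ S, (θ i / T) * (Real.log (θ i) - Real.log (Function.update θ a c i))
      = (θ a / T) * (Real.log (θ a) - Real.log c) := by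
    rw [Finset.sum_eq_single_of_mem a haS]
    · rw [Function.update_self]
    · intro i hi hne
      rw [Function.update_of_ne hne, sub_self, mul_zero]
  rw [hsum1, hsum2]
  have h1 : Real.log (T + d) - Real.log T ≤ d / T := by
    have h := Real.log_le_sub_one_of_pos (show (0:ℝ) < (T + d)/T by positivity)
    rw [Real.log_div (ne_of_gt hT'0) (ne_of_gt hT)] at h
    have : (T + d)/T - 1 = d / T := by field_simp; ring
    linarith [this ▸ h]
  have h2 : Real.log (θ a) - Real.log c ≤ -(d / c) := by
    have h := log_lb9 (c / θ a) (by positivity)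
    rw [Real.log_div (ne_of_gt hc0) (ne_of_gt ha0)] at h
    have e1 : 1/(c/θ a) = θ a / c := by field_simp
    rw [e1] at h
    have e2 : d / c = 1 - θ a / c := by rw [hd]; field_simp
    linarith
  have h2' : (θ a / T) * (Real.log (θ a) - Real.log c) ≤ (θ a / T) * (-(d/c)) :=
    mul_le_mul_of_nonneg_left h2 (by positivity)
  have heq : (θ a / T) * (-(d/c)) + d / T = (c - θ a)^2 / (θ a * c) * (θ a / T) := by
    rw [hd]; field_simp; ring
  linarith

/-- Core of the `(0,δ)`-PAC sample-complexity lower bound with winner feedback: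
if nonnegative play counts `N_S` over the `k`-subsets of `{1,…,n}` satisfy, for each
suboptimal `a ∈ {2,…,n}`, the change-of-measure constraint
`∑_{S ∋ a} N_S · KL(p_S, p^a_S) ≥ L`, where `p_S` (resp. `p^a_S`) is the
Plackett–Luce winner distribution on `S` under `θ` (resp. `θ` with `θ_a` replaced by
`θ_1 + ε`), then `∑_S N_S ≥ L ∑_{a=2}^n θ_a (θ_1 + ε)/(θ_1 - θ_a + ε)²`. -/
theorem stmt9 (n k : ℕ) (hn : 2 ≤ n) (hk2 : 2 ≤ k) (hkn : k ≤ n)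
    (θ : ℕ → ℝ) (hθ : ∀ i ∈ Finset.Icc 1 n, 0 < θ i ∧ θ i ≤ 1)
    (hbest : ∀ a ∈ Finset.Icc 2 n, θ a < θ 1)
    (ε : ℝ) (hε : 0 < ε) (L : ℝ) (hL : 0 ≤ L)
    (N : Finset ℕ → ℝ)
    (hN : ∀ S ∈ (Finset.Icc 1 n).powersetCard k, 0 ≤ N S)
    (hcon : ∀ a ∈ Finset.Icc 2 n,
      L ≤ ∑ S ∈ ((Finset.Icc 1 n).powersetCard k).filter (fun S => a ∈ S),
            N S *
              ∑ i ∈ S, (θ i / ∑ j ∈ S, θ j) *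
                Real.log ((θ i / ∑ j ∈ S, θ j) /
                  (Function.update θ a (θ 1 + ε) i /
                    ∑ j ∈ S, Function.update θ a (θ 1 + ε) j))) :
    L * ∑ a ∈ Finset.Icc 2 n, θ a * (θ 1 + ε) / (θ 1 - θ a + ε) ^ 2
      ≤ ∑ S ∈ (Finset.Icc 1 n).powersetCard k, N S := by
  set F := (Finset.Icc 1 n).powersetCard k with hF
  have hSsub : ∀ S ∈ F, S ⊆ Finset.Icc 1 n := by
    intro S hS; exact (Finset.mem_powersetCard.mp hS).1
  have hSpos : ∀ S ∈ F, ∀ i ∈ S, 0 < θ i := by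
    intro S hS i hi; exact (hθ i (hSsub S hS hi)).1
  -- positivity facts
  have h1n : (1:ℕ) ∈ Finset.Icc 1 n := by
    rw [Finset.mem_Icc]; omega
  have hθ1 : 0 < θ 1 := (hθ 1 h1n).1
  -- step: per-a lower bound
  have hstep : ∀ a ∈ Finset.Icc 2 n,
      L * (θ a * (θ 1 + ε) / (θ 1 - θ a + ε) ^ 2)
        ≤ ∑ S ∈ F.filter (fun S => a ∈ S), N S * (θ a / ∑ j ∈ S, θ j) := by
    intro a ha
    have haIcc1 : a ∈ Finset.Icc 1 n := by
      rw [Finset.mem_Icc] at ha ⊢; omega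
    have hθa : 0 < θ a := (hθ a haIcc1).1
    have hba : θ a < θ 1 := hbest a ha
    have hΔ : 0 < θ 1 - θ a + ε := by linarith
    have hΔ' : θ 1 + ε - θ a = θ 1 - θ a + ε := by ring
    set ca : ℝ := (θ 1 - θ a + ε)^2 / (θ a * (θ 1 + ε)) with hca
    have hca0 : 0 < ca := by rw [hca]; positivity
    have hX0 : 0 ≤ ∑ S ∈ F.filter (fun S => a ∈ S), N S * (θ a / ∑ j ∈ S, θ j) := by
      apply Finset.sum_nonneg
      intro S hS
      have hS' := Finset.mem_filter.mp hS
      have hT : 0 < ∑ j ∈ S, θ j := Finset.sum_pos (hSpos S hS'.1) ⟨a, hS'.2⟩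
      exact mul_nonneg (hN S hS'.1) (by positivity)
    have hLX : L ≤ ca * ∑ S ∈ F.filter (fun S => a ∈ S), N S * (θ a / ∑ j ∈ S, θ j) := by
      refine le_trans (hcon a ha) ?_
      rw [Finset.mul_sum]
      apply Finset.sum_le_sum
      intro S hS
      have hS' := Finset.mem_filter.mp hS
      have hkl := kl_bound9 θ a S hS'.2 (hSpos S hS'.1) (θ 1 + ε) (by linarith)
      rw [hΔ', ← hca] at hkl
      calc N S * ∑ i ∈ S, (θ i / ∑ j ∈ S, θ j) *
              Real.log ((θ i / ∑ j ∈ S, θ j) /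
                (Function.update θ a (θ 1 + ε) i /
                  ∑ j ∈ S, Function.update θ a (θ 1 + ε) j))
          ≤ N S * (ca * (θ a / ∑ j ∈ S, θ j)) :=
            mul_le_mul_of_nonneg_left hkl (hN S hS'.1)
        _ = ca * (N S * (θ a / ∑ j ∈ S, θ j)) := by ring
    have heq : L * (θ a * (θ 1 + ε) / (θ 1 - θ a + ε) ^ 2) = L / ca := by
      rw [hca]; field_simp
    rw [heq, div_le_iff₀ hca0]
    linarith [hLX]
  -- sum over a, swap, bound
  calc L * ∑ a ∈ Finset.Icc 2 n, θ a * (θ 1 + ε) / (θ 1 - θ a + ε) ^ 2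
      = ∑ a ∈ Finset.Icc 2 n, L * (θ a * (θ 1 + ε) / (θ 1 - θ a + ε) ^ 2) := by
        rw [Finset.mul_sum]
    _ ≤ ∑ a ∈ Finset.Icc 2 n, ∑ S ∈ F.filter (fun S => a ∈ S),
          N S * (θ a / ∑ j ∈ S, θ j) := Finset.sum_le_sum hstep
    _ = ∑ S ∈ F, ∑ a ∈ (Finset.Icc 2 n).filter (fun a => a ∈ S),
          N S * (θ a / ∑ j ∈ S, θ j) := by
        simp only [Finset.sum_filter]
        exact Finset.sum_comm
    _ ≤ ∑ S ∈ F, N S := by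
        apply Finset.sum_le_sum
        intro S hS
        have hex : ∃ i, i ∈ S := by
          have hcard := (Finset.mem_powersetCard.mp hS).2
          have : S.Nonempty := Finset.card_pos.mp (by omega)
          exact this
        obtain ⟨i0, hi0⟩ := hex
        have hT : 0 < ∑ j ∈ S, θ j := Finset.sum_pos (hSpos S hS) ⟨i0, hi0⟩
        have hsub : (Finset.Icc 2 n).filter (fun a => a ∈ S) ⊆ S := by
          intro x hx; exact (Finset.mem_filter.mp hx).2
        have hle : ∑ a ∈ (Finset.Icc 2 n).filter (fun a => a ∈ S), θ a
            ≤ ∑ j ∈ S, θ j := by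
          apply Finset.sum_le_sum_of_subset_of_nonneg hsub
          intro j hj _; exact le_of_lt (hSpos S hS j hj)
        calc ∑ a ∈ (Finset.Icc 2 n).filter (fun a => a ∈ S),
              N S * (θ a / ∑ j ∈ S, θ j)
            = N S * ((∑ a ∈ (Finset.Icc 2 n).filter (fun a => a ∈ S), θ a)
                / ∑ j ∈ S, θ j) := by
              rw [← Finset.mul_sum, ← Finset.sum_div]
          _ ≤ N S * 1 := by
              apply mul_le_mul_of_nonneg_left _ (hN S hS)
              rw [div_le_one hT]; exact hle
          _ = N S := mul_one _
end
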